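/- (Key strict inequality for Theorem 3.11.) Let Φ be any branching mechanism with Lévy measure π, and let 0 < r < r' < ∞ be such that π((r,r')) > 0. For a branching mechanism Ψ and λ ≥ 0, let u^Ψ_t(λ) denote the unique locally bounded nonnegative solution of u_t = λt − ∫₀ᵗ Ψ(u_s) ds. Then for every t > 0, u^{Φ^{(r,∞)}}_t(π((r,∞))) > u^{Φ^{[r',∞)}}_t(π([r',∞))). -/

import Mathlib

set_option maxHeartbeats 1000000


open MeasureTheory Filter Set

/-- The branching mechanism `Φ(λ) = αλ + βλ² + ∫_{(0,∞)} (e^{-λθ} - 1 + λθ) π(dθ)`. -/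
noncomputable def Phi (α β : ℝ) (π : Measure ℝ) (lam : ℝ) : ℝ :=
  α * lam + β * lam ^ 2 + ∫ θ, (Real.exp (-lam * θ) - 1 + lam * θ) ∂π

/-- The `(r,∞)`-truncated branching mechanism
`Φ^{(r,∞)}(λ) = Φ(λ) + ∫_{(r,∞)} (1 - e^{-λθ}) π(dθ)`. -/
noncomputable def PhiIoi (α β : ℝ) (π : Measure ℝ) (r lam : ℝ) : ℝ :=
  Phi α β π lam + ∫ θ in Set.Ioi r, (1 - Real.exp (-lam * θ)) ∂π

/-- The `[r,∞)`-truncated branching mechanism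
`Φ^{[r,∞)}(λ) = Φ(λ) + ∫_{[r,∞)} (1 - e^{-λθ}) π(dθ)`. -/
noncomputable def PhiIci (α β : ℝ) (π : Measure ℝ) (r lam : ℝ) : ℝ :=
  Phi α β π lam + ∫ θ in Set.Ici r, (1 - Real.exp (-lam * θ)) ∂π

/-- `u` is a locally bounded nonnegative solution of `u_t = λt - ∫₀ᵗ Φ(u_s) ds`. -/
def IsMassSolution (Φ : ℝ → ℝ) (lam : ℝ) (u : ℝ → ℝ) : Prop :=
  (∀ t, 0 ≤ t → 0 ≤ u t) ∧
  (∀ T, 0 < T → BddAbove (u '' Set.Icc 0 T)) ∧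
  (∀ t, 0 ≤ t → u t = lam * t - ∫ s in (0:ℝ)..t, Φ (u s))

/-- elementary: `0 ≤ e^{-x} - 1 + x ≤ min x x²` for `x ≥ 0`. -/
lemma exp_sub_bound {x : ℝ} (hx : 0 ≤ x) :
    Real.exp (-x) - 1 + x ∈ Set.Icc 0 (min x (x^2)) := by
  have h1 : -x + 1 ≤ Real.exp (-x) := Real.add_one_le_exp (-x)
  have h2 : Real.exp (-x) ≤ 1 := Real.exp_le_one_iff.mpr (by linarith)
  have h3 : Real.exp (-x) * (1 + x) ≤ 1 := by
    have := Real.add_one_le_exp x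
    calc Real.exp (-x) * (1 + x) ≤ Real.exp (-x) * Real.exp x := by
          apply mul_le_mul_of_nonneg_left (by linarith) (Real.exp_pos _).le
      _ = 1 := by rw [← Real.exp_add]; simp
  constructor
  · linarith
  · refine le_min (by linarith) ?_
    nlinarith [Real.exp_pos (-x)]

lemma tail_finite {π : Measure ℝ}
    (hint : Integrable (fun θ => min θ (θ ^ 2)) π) {r : ℝ} (hr : 0 < r) :
    π (Set.Ioi r) < ⊤ := by
  have hsub : Set.Ioi r ⊆ {a | min r (r^2) ≤ min a (a^2)} := by
    intro a ha
    have ha' : r < a := ha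
    have : r^2 ≤ a^2 := by nlinarith
    exact le_min (min_le_left _ _ |>.trans ha'.le) (min_le_right _ _ |>.trans this)
  exact lt_of_le_of_lt (measure_mono hsub)
    (hint.measure_ge_lt_top (lt_min hr (by positivity)))

section gap
variable {π : Measure ℝ} {v : ℝ}

/-- integrability of bounded continuous functions on finite-measure sets -/
lemma integrableOn_of_bounded_cont {f : ℝ → ℝ} (hf : Continuous f)
    {s : Set ℝ} (hs : MeasurableSet s) (hfin : π s ≠ ⊤) {C : ℝ}
    (hb : ∀ x ∈ s, ‖f x‖ ≤ C) : IntegrableOn f s π := by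
  refine Integrable.mono' (g := fun _ => C)
    (integrableOn_const hfin) ?_ ?_
  · exact hf.aestronglyMeasurable.restrict
  · filter_upwards [ae_restrict_mem hs] with x hx using hb x hx

lemma exp_abs_le_one {v θ : ℝ} (hv : 0 ≤ v) (hθ : 0 ≤ θ) :
    ‖Real.exp (-v * θ)‖ ≤ 1 := by
  rw [Real.norm_eq_abs, abs_of_pos (Real.exp_pos _)]
  exact Real.exp_le_one_iff.mpr (by nlinarith)

lemma one_sub_exp_abs_le_one {v θ : ℝ} (hv : 0 ≤ v) (hθ : 0 ≤ θ) :
    ‖1 - Real.exp (-v * θ)‖ ≤ 1 := by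
  rw [Real.norm_eq_abs, abs_le]
  have h1 : Real.exp (-v*θ) ≤ 1 := Real.exp_le_one_iff.mpr (by nlinarith)
  have h2 := (Real.exp_pos (-v*θ)).le
  constructor <;> linarith

/-- Key gap: `λ₂ - Φ₂(v) < λ₁ - Φ₁(v)` for `v ≥ 0`. -/
lemma key_gap (α β : ℝ) (π : Measure ℝ)
    (hint : Integrable (fun θ => min θ (θ ^ 2)) π)
    {r r' : ℝ} (hr : 0 < r) (hrr' : r < r') (hππ : 0 < π (Set.Ioo r r'))
    {v : ℝ} (hv : 0 ≤ v) :
    (π (Set.Ici r')).toReal - PhiIci α β π r' v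
      < (π (Set.Ioi r)).toReal - PhiIoi α β π r v := by
  have hfin1 : π (Set.Ioi r) ≠ ⊤ := (tail_finite hint hr).ne
  have hr' : 0 < r' := hr.trans hrr'
  have hfin2 : π (Set.Ici r') ≠ ⊤ :=
    ((measure_mono (Set.Ici_subset_Ioi.mpr hrr')).trans_lt (tail_finite hint hr)).ne
  have hfin3 : π (Set.Ioo r r') ≠ ⊤ :=
    ((measure_mono (Set.Ioo_subset_Ioi_self)).trans_lt (tail_finite hint hr)).ne
  -- integrability facts
  have hcexp : Continuous fun θ : ℝ => Real.exp (-v * θ) := by fun_prop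
  have hie1 : IntegrableOn (fun θ => Real.exp (-v*θ)) (Set.Ioi r) π :=
    integrableOn_of_bounded_cont hcexp measurableSet_Ioi hfin1
      (fun x hx => exp_abs_le_one hv (hr.le.trans (le_of_lt hx)))
  have hie2 : IntegrableOn (fun θ => Real.exp (-v*θ)) (Set.Ici r') π :=
    hie1.mono_set (fun x hx => hrr'.trans_le hx)
  have hie3 : IntegrableOn (fun θ => Real.exp (-v*θ)) (Set.Ioo r r') π :=
    hie1.mono_set (fun x hx => hx.1)
  -- rewrite 1 - exp integrals
  have key : ∀ (s : Set ℝ), MeasurableSet s → π s ≠ ⊤ →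
      IntegrableOn (fun θ => Real.exp (-v*θ)) s π →
      ∫ θ in s, (1 - Real.exp (-v * θ)) ∂π
        = (π s).toReal - ∫ θ in s, Real.exp (-v*θ) ∂π := by
    intro s hs hfin hei
    rw [integral_sub (integrableOn_const (C := (1:ℝ)) hfin) hei]
    simp [Measure.restrict_apply_univ]
    rfl
  -- decomposition Ioi r = Ioo r r' ∪ Ici r'
  have hdecomp : Set.Ioi r = Set.Ioo r r' ∪ Set.Ici r' := by
    ext x; simp only [Set.mem_Ioi, Set.mem_union, Set.mem_Ioo, Set.mem_Ici]
    constructor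
    · intro hx; rcases lt_or_ge x r' with h | h
      · exact Or.inl ⟨hx, h⟩
      · exact Or.inr h
    · rintro (⟨h, _⟩ | h); exact h; linarith
  have hsplit : ∫ θ in Set.Ioi r, Real.exp (-v*θ) ∂π
      = ∫ θ in Set.Ioo r r', Real.exp (-v*θ) ∂π
        + ∫ θ in Set.Ici r', Real.exp (-v*θ) ∂π := by
    rw [hdecomp] at hie1 ⊢
    refine setIntegral_union ?_ measurableSet_Ici hie3 hie2
    rw [Set.disjoint_left]
    rintro x ⟨_, h2⟩ h3
    exact absurd h3 (not_le.mpr h2)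
  have hpos : 0 < ∫ θ in Set.Ioo r r', Real.exp (-v*θ) ∂π := by
    have hge : Real.exp (-v * r') * (π (Set.Ioo r r')).toReal
        ≤ ∫ θ in Set.Ioo r r', Real.exp (-v*θ) ∂π := by
      refine setIntegral_ge_of_const_le_real measurableSet_Ioo hfin3 ?_ hie3
      intro x hx
      exact Real.exp_le_exp.mpr (by nlinarith [hx.2])
    have : 0 < Real.exp (-v * r') * (π (Set.Ioo r r')).toReal :=
      mul_pos (Real.exp_pos _) (ENNReal.toReal_pos hππ.ne' hfin3)
    linarith
  rw [PhiIoi, PhiIci, key _ measurableSet_Ioi hfin1 hie1,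
    key _ measurableSet_Ici hfin2 hie2]
  have := hsplit
  linarith
end gap


section cont
variable {π : Measure ℝ}

lemma ae_pos (π : Measure ℝ) (hsupp : π (Set.Iic 0) = 0) : ∀ᵐ θ ∂π, 0 < θ := by
  rw [MeasureTheory.ae_iff]
  convert hsupp using 2
  ext θ; simp

lemma contOn_phi (α β : ℝ) (π : Measure ℝ) (hsupp : π (Set.Iic 0) = 0)
    (hint : Integrable (fun θ => min θ (θ ^ 2)) π) :
    ContinuousOn (Phi α β π) (Set.Ici 0) := by
  have hpoly : Continuous fun lam : ℝ => α * lam + β * lam ^ 2 := by fun_prop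
  refine ContinuousOn.add (hpoly.continuousOn) ?_
  intro lam₀ hlam₀
  set M : ℝ := lam₀ + 1 with hM
  have hM0 : 0 ≤ M := by simp only [Set.mem_Ici] at hlam₀; linarith
  apply continuousWithinAt_of_dominated
    (bound := fun θ => max M (M^2) * min θ (θ^2))
  · filter_upwards with lam
    exact (Continuous.aestronglyMeasurable (by fun_prop))
  · have h1 : ∀ᶠ lam in nhdsWithin lam₀ (Set.Ici 0), lam ≤ M :=
      eventually_nhdsWithin_of_eventually_nhds
        (eventually_le_nhds (by linarith : lam₀ < M))
    have h2 : ∀ᶠ lam in nhdsWithin lam₀ (Set.Ici 0), 0 ≤ lam :=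
      eventually_nhdsWithin_of_forall (fun x hx => hx)
    filter_upwards [h1, h2] with lam hle h0
    filter_upwards [ae_pos π hsupp] with θ hθ
    have hx : 0 ≤ lam * θ := by positivity
    have hb := exp_sub_bound hx
    rw [Real.norm_eq_abs, neg_mul, abs_of_nonneg hb.1]
    calc Real.exp (-(lam*θ)) - 1 + lam*θ ≤ min (lam*θ) ((lam*θ)^2) := hb.2
      _ ≤ max M (M^2) * min θ (θ^2) := by
          have hMM : 0 ≤ max M (M^2) := le_max_of_le_left hM0
          rw [mul_min_of_nonneg _ _ hMM]
          refine le_min ?_ ?_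
          · refine (min_le_left _ _).trans ?_
            have : lam ≤ max M (M^2) := hle.trans (le_max_left _ _)
            nlinarith
          · refine (min_le_right _ _).trans ?_
            have h1 : lam^2 ≤ M^2 := by nlinarith
            have h2 : M^2 ≤ max M (M^2) := le_max_right _ _
            have hθ2 : (0:ℝ) ≤ θ^2 := sq_nonneg θ
            calc (lam*θ)^2 = lam^2 * θ^2 := by ring
              _ ≤ max M (M^2) * θ^2 := by nlinarith
  · exact hint.const_mul _
  · filter_upwards with θ
    exact (Continuous.continuousWithinAt (by fun_prop))

lemma contOn_tail (π : Measure ℝ) {r : ℝ} (hr : 0 < r)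
    {s : Set ℝ} (hs : MeasurableSet s) (hss : s ⊆ Set.Ioi r) (hfin : π s ≠ ⊤) :
    ContinuousOn (fun lam => ∫ θ in s, (1 - Real.exp (-lam * θ)) ∂π) (Set.Ici 0) := by
  intro lam₀ hlam₀
  apply continuousWithinAt_of_dominated (bound := fun _ => (1:ℝ))
  · filter_upwards with lam
    exact (Continuous.aestronglyMeasurable (by fun_prop)).restrict
  · have h2 : ∀ᶠ lam in nhdsWithin lam₀ (Set.Ici 0), 0 ≤ lam :=
      eventually_nhdsWithin_of_forall (fun x hx => hx)
    filter_upwards [h2] with lam h0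
    filter_upwards [ae_restrict_mem hs] with θ hθ
    exact one_sub_exp_abs_le_one h0 (hr.le.trans (le_of_lt (hss hθ)))
  · exact integrableOn_const hfin
  · filter_upwards with θ
    exact (Continuous.continuousWithinAt (by fun_prop))
end cont

lemma solution_regularity (Φ : ℝ → ℝ) (hΦ : ContinuousOn Φ (Set.Ici 0))
    (lam : ℝ) (hlam : 0 ≤ lam) (u : ℝ → ℝ) (hu : IsMassSolution Φ lam u) :
    ContinuousOn u (Set.Ici 0) ∧
    (∀ s, 0 < s → HasDerivAt u (lam - Φ (u s)) s) ∧
    HasDerivWithinAt u (lam - Φ (u 0)) (Set.Ici 0) 0 := by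
  obtain ⟨hpos, hbdd, heq⟩ := hu
  set g : ℝ → ℝ := fun s => Φ (u s) with hgdef
  -- boundedness of g on [0,T]
  have hbound : ∀ T : ℝ, 0 < T → ∃ C, ∀ s ∈ Set.Icc (0:ℝ) T, ‖g s‖ ≤ C := by
    intro T hT
    obtain ⟨M, hM⟩ := hbdd T hT
    have hMem : ∀ s ∈ Set.Icc (0:ℝ) T, u s ∈ Set.Icc (0:ℝ) (max M 0) := by
      intro s hs
      exact ⟨hpos s hs.1, le_max_of_le_left (hM ⟨s, hs, rfl⟩)⟩
    obtain ⟨C, hC⟩ :=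
      (isCompact_Icc : IsCompact (Set.Icc (0:ℝ) (max M 0))).exists_bound_of_continuousOn
        (hΦ.mono (fun x hx => hx.1))
    exact ⟨C, fun s hs => hC _ (hMem s hs)⟩
  -- integrability of g on all [0,t]
  have hInt : ∀ t : ℝ, 0 ≤ t → IntervalIntegrable g volume 0 t := by
    by_contra hcon
    push_neg at hcon
    obtain ⟨t₀, ht₀, hni⟩ := hcon
    set S : Set ℝ := {t | 0 ≤ t ∧ IntervalIntegrable g volume 0 t} with hSdef
    have hS0 : (0:ℝ) ∈ S := ⟨le_rfl, IntervalIntegrable.refl⟩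
    have hSdc : ∀ t ∈ S, ∀ t', 0 ≤ t' → t' ≤ t → t' ∈ S := by
      rintro t ⟨h0t, hit⟩ t' h0 hle
      refine ⟨h0, hit.mono_set ?_⟩
      rw [Set.uIcc_of_le h0, Set.uIcc_of_le h0t]
      exact Set.Icc_subset_Icc le_rfl hle
    have hub : ∀ s ∈ S, s ≤ t₀ := by
      intro s hs
      by_contra hlt
      push_neg at hlt
      exact hni (hSdc s hs t₀ ht₀ hlt.le).2
    have hbddS : BddAbove S := ⟨t₀, hub⟩
    set T := sSup S with hTdef
    have hT0 : 0 ≤ T := le_csSup hbddS hS0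
    have hTt₀ : T ≤ t₀ := csSup_le ⟨0, hS0⟩ hub
    have hlow : ∀ s, 0 ≤ s → s < T → IntervalIntegrable g volume 0 s := by
      intro s h0 hsT
      obtain ⟨s', hs', hss'⟩ := exists_lt_of_lt_csSup ⟨0, hS0⟩ hsT
      exact (hSdc s' hs' s h0 hss'.le).2
    have hhigh : ∀ s, T < s → u s = lam * s := by
      intro s hs
      have h0s : 0 ≤ s := hT0.trans hs.le
      have hnii : ¬ IntervalIntegrable g volume 0 s := by
        intro hii
        exact absurd (le_csSup hbddS (⟨h0s, hii⟩ : s ∈ S)) (not_le.mpr hs)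
      rw [heq s h0s, intervalIntegral.integral_undef hnii, sub_zero]
    set T' := t₀ + 1 with hT'def
    have hTT' : T < T' := by dsimp [T']; linarith
    have hT'pos : 0 < T' := by dsimp [T']; linarith
    -- continuity of u on Ico 0 T
    have hcu : ContinuousOn u (Set.Ico 0 T) := by
      intro s hs
      set b := (s + T)/2 with hbdef
      have hsb : s < b := by dsimp [b]; linarith [hs.2]
      have hbT : b < T := by dsimp [b]; linarith [hs.1, hs.2]
      have h0b : 0 ≤ b := hs.1.trans hsb.le
      have hib : IntervalIntegrable g volume 0 b := hlow b h0b hbT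
      have hicc : IntegrableOn g (Set.Icc 0 b) volume :=
        (integrableOn_Icc_iff_integrableOn_Ioc).mpr
          ((intervalIntegrable_iff_integrableOn_Ioc_of_le h0b).mp hib)
      have hcont : ContinuousOn (fun x => lam * x - ∫ τ in (0:ℝ)..x, g τ) (Set.Icc 0 b) := by
        apply ContinuousOn.sub (Continuous.continuousOn (by fun_prop))
        have h := intervalIntegral.continuousOn_primitive_interval
          (μ := volume) (a := (0:ℝ)) (b := b) (f := g)
          (by rw [Set.uIcc_of_le h0b]; exact hicc)
        rwa [Set.uIcc_of_le h0b] at h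
      have hcu' : ContinuousOn u (Set.Icc 0 b) :=
        hcont.congr (fun x hx => heq x hx.1)
      refine (hcu' s ⟨hs.1, hsb.le⟩).mono_of_mem_nhdsWithin (mem_nhdsWithin.mpr
        ⟨Set.Iio b, isOpen_Iio, hsb, ?_⟩)
      rintro x ⟨hx1, hx2, _⟩
      exact ⟨hx2, le_of_lt hx1⟩
    -- measurability of g on [0, T']
    have hgm : AEStronglyMeasurable g (volume.restrict (Set.Icc 0 T')) := by
      have hm1 : AEStronglyMeasurable g (volume.restrict (Set.Ico 0 T)) :=
        ((hΦ.comp hcu (fun x hx => hpos x hx.1)).aestronglyMeasurable measurableSet_Ico)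
      have hm2 : AEStronglyMeasurable g (volume.restrict (Set.Ioc T T')) := by
        have hcg : ContinuousOn g (Set.Ioc T T') := by
          have hcl : ContinuousOn (fun x => Φ (lam * x)) (Set.Ioc T T') := by
            apply hΦ.comp (Continuous.continuousOn (by fun_prop))
            intro x hx
            exact mul_nonneg hlam (hT0.trans hx.1.le)
          exact hcl.congr (fun x hx => by simp only [g, hhigh x hx.1])
        exact hcg.aestronglyMeasurable measurableSet_Ioc
      have hm3 : AEStronglyMeasurable g (volume.restrict {T}) := by
        rw [Measure.restrict_eq_zero.mpr Real.volume_singleton]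
        exact aestronglyMeasurable_zero_measure g
      have hunion : AEStronglyMeasurable g
          (volume.restrict ((Set.Ico 0 T ∪ Set.Ioc T T') ∪ {T})) := by
        rw [aestronglyMeasurable_union_iff]
        exact ⟨(aestronglyMeasurable_union_iff).mpr ⟨hm1, hm2⟩, hm3⟩
      refine hunion.mono_measure (Measure.restrict_mono ?_ le_rfl)
      intro x hx
      rcases lt_trichotomy x T with h | h | h
      · exact Or.inl (Or.inl ⟨hx.1, h⟩)
      · exact Or.inr (by simp [h])
      · exact Or.inl (Or.inr ⟨h, hx.2⟩)
    obtain ⟨C, hC⟩ := hbound T' hT'pos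
    have hion : IntegrableOn g (Set.Icc 0 T') volume := by
      refine Integrable.mono' (g := fun _ => C)
        (integrableOn_const measure_Icc_lt_top.ne) hgm ?_
      filter_upwards [ae_restrict_mem measurableSet_Icc] with x hx using hC x hx
    have hT'S : T' ∈ S := by
      refine ⟨hT'pos.le, IntegrableOn.intervalIntegrable ?_⟩
      rwa [Set.uIcc_of_le hT'pos.le]
    exact absurd (le_csSup hbddS hT'S) (not_le.mpr hTT')
  -- continuity of u on all of [0, ∞)
  have hcu : ContinuousOn u (Set.Ici 0) := by
    intro s hs
    set b := s + 1 with hbdef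
    have hsb : s < b := by dsimp [b]; linarith
    have h0b : 0 ≤ b := hs.trans hsb.le
    have hicc : IntegrableOn g (Set.Icc 0 b) volume :=
      (integrableOn_Icc_iff_integrableOn_Ioc).mpr
        ((intervalIntegrable_iff_integrableOn_Ioc_of_le h0b).mp (hInt b h0b))
    have hcont : ContinuousOn (fun x => lam * x - ∫ τ in (0:ℝ)..x, g τ) (Set.Icc 0 b) := by
      apply ContinuousOn.sub (Continuous.continuousOn (by fun_prop))
      have h := intervalIntegral.continuousOn_primitive_interval
        (μ := volume) (a := (0:ℝ)) (b := b) (f := g)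
        (by rw [Set.uIcc_of_le h0b]; exact hicc)
      rwa [Set.uIcc_of_le h0b] at h
    have hcu' : ContinuousOn u (Set.Icc 0 b) :=
      hcont.congr (fun x hx => heq x hx.1)
    refine (hcu' s ⟨hs, hsb.le⟩).mono_of_mem_nhdsWithin (mem_nhdsWithin.mpr
      ⟨Set.Iio b, isOpen_Iio, hsb, ?_⟩)
    rintro x ⟨hx1, hx2⟩
    exact ⟨hx2, le_of_lt hx1⟩
  have hgc : ContinuousOn g (Set.Ici 0) := hΦ.comp hcu (fun x hx => hpos x hx)
  have hgm : AEStronglyMeasurable g (volume.restrict (Set.Ici 0)) :=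
    hgc.aestronglyMeasurable measurableSet_Ici
  refine ⟨hcu, ?_, ?_⟩
  · intro s hs
    have hFder : HasDerivAt (fun t => ∫ x in (0:ℝ)..t, g x) (g s) s :=
      intervalIntegral.integral_hasDerivAt_right (hInt s hs.le)
        ⟨Set.Ici 0, Ici_mem_nhds hs, hgm⟩ (hgc.continuousAt (Ici_mem_nhds hs))
    have hLin : HasDerivAt (fun t : ℝ => lam * t) lam s := by
      simpa using (hasDerivAt_id s).const_mul lam
    apply (hLin.sub hFder).congr_of_eventuallyEq
    filter_upwards [Ioi_mem_nhds hs] with x (hx : 0 < x)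
    exact heq x hx.le
  · have hFder : HasDerivWithinAt (fun t => ∫ x in (0:ℝ)..t, g x) (g 0) (Set.Ici 0) 0 :=
      intervalIntegral.integral_hasDerivWithinAt_right (s := Set.Ici 0)
        (t := Set.Ioi 0) (hInt 0 le_rfl)
        ⟨Set.Ici 0, Filter.mem_of_superset self_mem_nhdsWithin
          Set.Ioi_subset_Ici_self, hgm⟩
        ((hgc 0 Set.self_mem_Ici).mono Set.Ioi_subset_Ici_self)
    have hLin : HasDerivWithinAt (fun t : ℝ => lam * t) lam (Set.Ici 0) 0 := by
      simpa using ((hasDerivAt_id (0:ℝ)).const_mul lam).hasDerivWithinAt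
    exact (hLin.sub hFder).congr (fun x hx => heq x hx) (heq 0 le_rfl)

/-- Key strict inequality for Theorem 3.11: if `π((r,r')) > 0` then for every
`t > 0`, `u^{Φ^{(r,∞)}}_t(π((r,∞))) > u^{Φ^{[r',∞)}}_t(π([r',∞)))`. -/
theorem mass_ode_strict_inequality_local
    (α β : ℝ) (hβ : 0 ≤ β) (π : Measure ℝ)
    (hsupp : π (Set.Iic 0) = 0) (hσ : SigmaFinite π)
    (hint : Integrable (fun θ => min θ (θ ^ 2)) π)
    (r r' : ℝ) (hr : 0 < r) (hrr' : r < r')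
    (hππ : 0 < π (Set.Ioo r r'))
    (u₁ u₂ : ℝ → ℝ)
    (hu₁ : IsMassSolution (PhiIoi α β π r) ((π (Set.Ioi r)).toReal) u₁)
    (hu₂ : IsMassSolution (PhiIci α β π r') ((π (Set.Ici r')).toReal) u₂) :
    ∀ t : ℝ, 0 < t → u₂ t < u₁ t := by
  intro t ht
  have hr' : 0 < r' := hr.trans hrr'
  set lam₁ := (π (Set.Ioi r)).toReal with hl1
  set lam₂ := (π (Set.Ici r')).toReal with hl2
  set Φ₁ := PhiIoi α β π r with hP1
  set Φ₂ := PhiIci α β π r' with hP2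
  have hΦ₁ : ContinuousOn Φ₁ (Set.Ici 0) := by
    rw [hP1]; unfold PhiIoi
    exact (contOn_phi α β π hsupp hint).add
      (contOn_tail π hr measurableSet_Ioi subset_rfl (tail_finite hint hr).ne)
  have hΦ₂ : ContinuousOn Φ₂ (Set.Ici 0) := by
    rw [hP2]; unfold PhiIci
    exact (contOn_phi α β π hsupp hint).add
      (contOn_tail π hr measurableSet_Ici (fun x hx => hrr'.trans_le hx)
        ((measure_mono (Set.Ici_subset_Ioi.mpr hrr')).trans_lt (tail_finite hint hr)).ne)
  obtain ⟨hc₁, hd₁, hd₁0⟩ :=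
    solution_regularity Φ₁ hΦ₁ lam₁ ENNReal.toReal_nonneg u₁ hu₁
  obtain ⟨hc₂, hd₂, hd₂0⟩ :=
    solution_regularity Φ₂ hΦ₂ lam₂ ENNReal.toReal_nonneg u₂ hu₂
  set w := fun s => u₁ s - u₂ s with hwdef
  have hu₁0 : u₁ 0 = 0 := by
    rw [hu₁.2.2 0 le_rfl, intervalIntegral.integral_same]; ring
  have hu₂0 : u₂ 0 = 0 := by
    rw [hu₂.2.2 0 le_rfl, intervalIntegral.integral_same]; ring
  have hw0 : w 0 = 0 := by simp [hwdef, hu₁0, hu₂0]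
  have hgap : ∀ v : ℝ, 0 ≤ v → 0 < (lam₁ - Φ₁ v) - (lam₂ - Φ₂ v) := by
    intro v hv
    have := key_gap α β π hint hr hrr' hππ hv
    rw [hl1, hl2, hP1, hP2]
    linarith
  -- derivative of w at 0 within [0,∞) is positive, so w > 0 just after 0
  have hw0' : HasDerivWithinAt w ((lam₁ - Φ₁ (u₁ 0)) - (lam₂ - Φ₂ (u₂ 0)))
      (Set.Ici 0) 0 := hd₁0.sub hd₂0
  rw [hu₁0, hu₂0] at hw0'
  have hD₀ : 0 < (lam₁ - Φ₁ 0) - (lam₂ - Φ₂ 0) := hgap 0 le_rfl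
  have hslope0 := hasDerivWithinAt_iff_tendsto_slope.mp hw0'
  rw [Set.Ici_sdiff_left] at hslope0
  have hev : ∀ᶠ y in nhdsWithin 0 (Set.Ioi 0), 0 < slope w 0 y :=
    hslope0.eventually (eventually_gt_nhds hD₀)
  have hev2 : ∀ᶠ y in nhdsWithin 0 (Set.Ioi 0), 0 < w y := by
    filter_upwards [hev, self_mem_nhdsWithin] with y h1 (h2 : y ∈ Set.Ioi 0)
    rw [slope_def_field, hw0, sub_zero, sub_zero] at h1
    have hy : (0:ℝ) < y := h2
    calc (0:ℝ) = y * 0 := by ring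
      _ < y * (w y / y) := by exact mul_lt_mul_of_pos_left h1 hy
      _ = w y := by field_simp
  obtain ⟨δ, hδ, hδsub⟩ := mem_nhdsGT_iff_exists_Ioo_subset.mp hev2
  have hδ0 : (0:ℝ) < δ := hδ
  by_contra hcon
  push_neg at hcon
  have hwt : w t ≤ 0 := sub_nonpos.mpr hcon
  rcases lt_or_ge t δ with hlt | hge
  · exact absurd (hδsub ⟨ht, hlt⟩) (not_lt.mpr hwt)
  set ε := δ/2 with hε'
  have hε : 0 < ε := by dsimp [ε]; linarith
  have hεδ : ε < δ := by dsimp [ε]; linarith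
  have hεt : ε ≤ t := by linarith
  set A := Set.Icc ε t ∩ w ⁻¹' (Set.Iic 0) with hA
  have hwcont : ContinuousOn w (Set.Icc ε t) :=
    (hc₁.sub hc₂).mono (fun x hx => le_trans hε.le hx.1)
  have hAclosed : IsClosed A :=
    hwcont.preimage_isClosed_of_isClosed isClosed_Icc isClosed_Iic
  have hAne : A.Nonempty := ⟨t, ⟨hεt, le_rfl⟩, hwt⟩
  have hAbdd : BddBelow A := ⟨ε, fun x hx => hx.1.1⟩
  set s₀ := sInf A with hs₀def
  have hs₀A : s₀ ∈ A := hAclosed.csInf_mem hAne hAbdd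
  have hs₀pos : 0 < s₀ := hε.trans_le hs₀A.1.1
  have hwpos : ∀ s, 0 < s → s < s₀ → 0 < w s := by
    intro s h0 hlt'
    rcases lt_or_ge s δ with h | h
    · exact hδsub ⟨h0, h⟩
    · have hsA : s ∉ A := fun hmem =>
        absurd (csInf_le hAbdd hmem) (not_le.mpr hlt')
      have hsI : s ∈ Set.Icc ε t := ⟨by linarith, hlt'.le.trans hs₀A.1.2⟩
      by_contra hws
      push_neg at hws
      exact hsA ⟨hsI, hws⟩
  have hder : HasDerivAt w ((lam₁ - Φ₁ (u₁ s₀)) - (lam₂ - Φ₂ (u₂ s₀))) s₀ :=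
    (hd₁ s₀ hs₀pos).sub (hd₂ s₀ hs₀pos)
  have hmemIoo : Set.Ioo 0 s₀ ∈ nhdsWithin s₀ (Set.Iio s₀) :=
    mem_nhdsWithin.mpr ⟨Set.Ioi 0, isOpen_Ioi, hs₀pos, fun x hx => ⟨hx.1, hx.2⟩⟩
  have hws₀ : w s₀ = 0 := by
    refine le_antisymm hs₀A.2 ?_
    have hten : Filter.Tendsto w (nhdsWithin s₀ (Set.Iio s₀)) (nhds (w s₀)) :=
      (hder.continuousAt.continuousWithinAt).tendsto
    refine ge_of_tendsto hten ?_
    filter_upwards [hmemIoo] with x hx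
    exact (hwpos x hx.1 hx.2).le
  have hv : u₁ s₀ = u₂ s₀ := by
    have : u₁ s₀ - u₂ s₀ = 0 := hws₀
    linarith
  rw [hv] at hder
  have hv0 : 0 ≤ u₂ s₀ := hu₂.1 s₀ hs₀pos.le
  have hDpos : 0 < (lam₁ - Φ₁ (u₂ s₀)) - (lam₂ - Φ₂ (u₂ s₀)) := hgap _ hv0
  have hslope := hasDerivAt_iff_tendsto_slope.mp hder
  have hmono : nhdsWithin s₀ (Set.Iio s₀) ≤ nhdsWithin s₀ {s₀}ᶜ :=
    nhdsWithin_mono _ (fun x hx => ne_of_lt hx)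
  have hle : (lam₁ - Φ₁ (u₂ s₀)) - (lam₂ - Φ₂ (u₂ s₀)) ≤ 0 := by
    refine le_of_tendsto (hslope.mono_left hmono) ?_
    filter_upwards [hmemIoo] with x hx
    rw [slope_def_field, hws₀, sub_zero]
    exact div_nonpos_of_nonneg_of_nonpos (hwpos x hx.1 hx.2).le (by linarith [hx.2])
  linarith
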